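/- For any positive real θ and positive integer n, log(1 + n/θ) + n/(2θ(n+θ)) ≤ ∑_{i=1}^n 1/(θ+i-1) ≤ log(1 + n/θ) + n/(θ(n+θ)). -/

import Mathlib

open Real Finset


lemma trap (x : ℝ) (hx : 0 < x) :
    Real.log (x + 1) - Real.log x ≤ (2*x+1) / (2*x*(x+1)) := by
  set f : ℝ → ℝ := fun t => t*(t+2)/(2*(t+1)) - Real.log (1+t) with hf
  have hderiv : ∀ t : ℝ, 0 ≤ t →
      HasDerivAt f (((1*(t+2)+t*1)*(2*(t+1)) - t*(t+2)*(2*1))/(2*(t+1))^2 - 1/(1+t)) t := by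
    intro t ht
    have h1t : (1:ℝ) + t ≠ 0 := by linarith
    have hden : (2:ℝ)*(t+1) ≠ 0 := by linarith
    have hnum : HasDerivAt (fun t : ℝ => t*(t+2)) (1*(t+2)+t*1) t :=
      (hasDerivAt_id t).mul ((hasDerivAt_id t).add_const 2)
    have hden' : HasDerivAt (fun t : ℝ => 2*(t+1)) (2*1) t :=
      ((hasDerivAt_id t).add_const 1).const_mul 2
    have hdiv := hnum.div hden' hden
    have hlog : HasDerivAt (fun t : ℝ => Real.log (1+t)) (1/(1+t)) t := by
      have := ((hasDerivAt_id t).const_add 1).log h1t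
      simpa using this
    exact hdiv.sub hlog
  have hmono : MonotoneOn f (Set.Ici (0:ℝ)) := by
    apply monotoneOn_of_deriv_nonneg (convex_Ici 0)
    · intro t ht
      simp only [Set.mem_Ici] at ht
      exact ((hderiv t ht).differentiableAt).continuousAt.continuousWithinAt
    · intro t ht
      rw [interior_Ici] at ht
      simp only [Set.mem_Ioi] at ht
      exact ((hderiv t ht.le).differentiableAt).differentiableWithinAt
    · intro t ht
      rw [interior_Ici] at ht
      simp only [Set.mem_Ioi] at ht
      rw [(hderiv t ht.le).deriv]
      have h1t : (0:ℝ) < 1 + t := by linarith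
      rw [sub_nonneg, div_le_div_iff₀ h1t (by positivity)]
      nlinarith [mul_pos ht (mul_pos ht ht), mul_pos ht ht]
  have hkey : f 0 ≤ f (1/x) :=
    hmono Set.self_mem_Ici (Set.mem_Ici.mpr (by positivity)) (by positivity)
  have hf0 : f 0 = 0 := by simp [hf]
  rw [hf0, hf] at hkey
  simp only at hkey
  have hlogeq : Real.log (1 + 1/x) = Real.log (x+1) - Real.log x := by
    rw [show (1:ℝ) + 1/x = (x+1)/x by field_simp, Real.log_div (by linarith) hx.ne']
  rw [hlogeq] at hkey
  have halg : (1/x)*((1/x)+2)/(2*((1/x)+1)) = (2*x+1)/(2*x*(x+1)) := by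
    field_simp
    ring
  rw [halg] at hkey
  linarith

theorem stmt_0 (θ : ℝ) (hθ : 0 < θ) (n : ℕ) (hn : 1 ≤ n) :
    Real.log (1 + n / θ) + n / (2 * θ * (n + θ)) ≤
      ∑ i ∈ Finset.range n, 1 / (θ + i) ∧
    ∑ i ∈ Finset.range n, 1 / (θ + i) ≤
      Real.log (1 + n / θ) + n / (θ * (n + θ)) := by
  have hnθ : (0:ℝ) < (n:ℝ) + θ := by positivity
  have hA : ∑ i ∈ Finset.range n, (Real.log (θ+i+1) - Real.log (θ+i)) = Real.log (1 + n/θ) := by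
    have h := Finset.sum_range_sub (fun i : ℕ => Real.log (θ + i)) n
    push_cast at h
    rw [add_zero] at h
    rw [show (1:ℝ) + n/θ = (θ+n)/θ by field_simp,
        Real.log_div (by positivity) hθ.ne']
    rw [← h]
    apply Finset.sum_congr rfl
    intro i _
    ring_nf
  have hB : ∑ i ∈ Finset.range n, (1/(θ+i) - 1/(θ+i+1)) = n / (θ * (n + θ)) := by
    have h := Finset.sum_range_sub (fun i : ℕ => -(1/(θ + i))) n
    push_cast at h
    rw [add_zero] at h
    have h2 : ∑ i ∈ Finset.range n, (1/(θ+i) - 1/(θ+i+1)) = 1/θ - 1/(θ+n) := by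
      rw [show (1:ℝ)/θ - 1/(θ+n) = -(1/(θ+n)) - -(1/θ) by ring, ← h]
      apply Finset.sum_congr rfl
      intro i _
      ring_nf
    rw [h2]
    rw [div_sub_div _ _ hθ.ne' (by positivity : (θ + (n:ℝ)) ≠ 0)]
    rw [div_eq_div_iff (by positivity) (by positivity)]
    ring
  constructor
  · have heq : Real.log (1 + n/θ) + n / (2 * θ * (n + θ)) =
        ∑ i ∈ Finset.range n, ((Real.log (θ+i+1) - Real.log (θ+i)) + (1/2)*(1/(θ+i) - 1/(θ+i+1))) := by
      rw [Finset.sum_add_distrib, hA, ← Finset.mul_sum, hB]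
      rw [show (n:ℝ) / (2 * θ * (n + θ)) = 1/2 * (n / (θ * (n + θ))) by
        by_cases h0 : (n:ℝ) = 0
        · rw [h0]; simp
        · field_simp]
    rw [heq]
    apply Finset.sum_le_sum
    intro i _
    have hx : (0:ℝ) < θ + i := by positivity
    have ht := trap (θ + i) hx
    have e : (1/2:ℝ)*(1/(θ+i) - 1/(θ+i+1)) = 1/(θ+i) - (2*(θ+i)+1)/(2*(θ+i)*((θ+i)+1)) := by
      field_simp
      ring
    linarith
  · have heq : Real.log (1 + n/θ) + n / (θ * (n + θ)) =
        ∑ i ∈ Finset.range n, ((Real.log (θ+i+1) - Real.log (θ+i)) + (1/(θ+i) - 1/(θ+i+1))) := by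
      rw [Finset.sum_add_distrib, hA, hB]
    rw [heq]
    apply Finset.sum_le_sum
    intro i _
    have hx : (0:ℝ) < θ + i := by positivity
    have hlb : 1/((θ+i)+1) ≤ Real.log ((θ+i)+1) - Real.log (θ+i) := by
      have h := Real.log_le_sub_one_of_pos (show (0:ℝ) < (θ+i)/((θ+i)+1) by positivity)
      rw [Real.log_div hx.ne' (by positivity)] at h
      have : (θ+i)/((θ+i)+1) - 1 = -(1/((θ+i)+1)) := by field_simp; ring
      linarith [this ▸ h]
    linarith
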